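/- Let Y be a subspace of X. Then Y has property-SNP if and only if Y^⊥ has the Haar property in X*. -/
import Mathlib


open scoped ENNReal

noncomputable section

/-- `χ_ρ(g) = sup { |g v| : ρ v ≤ 1 } ∈ [0,∞]`. -/
def chi {V : Type*} [AddCommGroup V] [Module ℝ V] [TopologicalSpace V]
    (ρ : V → ℝ) (g : V →L[ℝ] ℝ) : ℝ≥0∞ :=
  ⨆ v ∈ {v : V | ρ v ≤ 1}, ENNReal.ofReal |g v|

/-- `χ_ρ^W(f)` for a functional `f` on a subspace `W`. -/
def chiSub {V : Type*} [AddCommGroup V] [Module ℝ V] [TopologicalSpace V]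
    (W : Submodule ℝ V) (ρ : V → ℝ) (f : W →L[ℝ] ℝ) : ℝ≥0∞ :=
  chi (fun w : W => ρ (w : V)) f

/-- `ft` is a Hahn-Banach extension of the pair `(f, ρ)` on the subspace `W`. -/
def IsHBE {V : Type*} [AddCommGroup V] [Module ℝ V] [TopologicalSpace V]
    (W : Submodule ℝ V) (ρ : V → ℝ) (f : W →L[ℝ] ℝ) (ft : V →L[ℝ] ℝ) : Prop :=
  ft.comp W.subtypeL = f ∧ chi ρ ft = chiSub W ρ f

/-- Property-SNP of a subspace `W` with respect to the family `p` of seminorms. -/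
def SNP {V : Type*} [AddCommGroup V] [Module ℝ V] [TopologicalSpace V]
    {ι : Type*} (p : ι → V → ℝ) (W : Submodule ℝ V) : Prop :=
  ∀ f : W →L[ℝ] ℝ, ∃ i, chiSub W (p i) f < ⊤ ∧ ∃ ft : V →L[ℝ] ℝ,
    ∀ j, (∀ v, p i v ≤ p j v) →
      IsHBE W (p j) f ft ∧ ∀ g : V →L[ℝ] ℝ, IsHBE W (p j) f g → g = ft

/-- The annihilator `W^⊥ = {g ∈ V* : g|_W = 0}`. -/
def ann {V : Type*} [AddCommGroup V] [Module ℝ V] [TopologicalSpace V]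
    (W : Submodule ℝ V) : Set (V →L[ℝ] ℝ) :=
  {g | ∀ y ∈ W, g y = 0}

/-- `d_{χ_ρ}(f, S) = inf {χ_ρ(f - s) : s ∈ S}`. -/
def distChi {V : Type*} [AddCommGroup V] [Module ℝ V] [TopologicalSpace V]
    (ρ : V → ℝ) (f : V →L[ℝ] ℝ) (S : Set (V →L[ℝ] ℝ)) : ℝ≥0∞ :=
  ⨅ s ∈ S, chi ρ (f - s)

/-- The metric projection `P_{S,χ_ρ}(f)`. -/
def projSet {V : Type*} [AddCommGroup V] [Module ℝ V] [TopologicalSpace V]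
    (ρ : V → ℝ) (S : Set (V →L[ℝ] ℝ)) (f : V →L[ℝ] ℝ) : Set (V →L[ℝ] ℝ) :=
  {s ∈ S | chi ρ (f - s) = distChi ρ f S}

/-- The Haar property of a subset `S` of the dual, with respect to the family `p`:
every `f` has a unique `𝒫_μ`-simultaneous best approximation in `S` for some `μ ∈ 𝒫`. -/
def HaarProperty {V : Type*} [AddCommGroup V] [Module ℝ V] [TopologicalSpace V]
    {ι : Type*} (p : ι → V → ℝ) (S : Set (V →L[ℝ] ℝ)) : Prop :=
  ∀ f : V →L[ℝ] ℝ, ∃ i, ∃ s₀ ∈ S, ∀ j, (∀ v, p i v ≤ p j v) → projSet (p j) S f = {s₀}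


section Aux

variable {V : Type*} [AddCommGroup V] [Module ℝ V] [TopologicalSpace V]

lemma ofReal_le_chi {ρ : V → ℝ} (g : V →L[ℝ] ℝ) {v : V} (hv : ρ v ≤ 1) :
    ENNReal.ofReal |g v| ≤ chi ρ g :=
  le_iSup₂ (f := fun v (_ : v ∈ {v : V | ρ v ≤ 1}) => ENNReal.ofReal |g v|) v hv

lemma chi_le_of_bound {ρ : V → ℝ} {g : V →L[ℝ] ℝ} {c : ℝ} (hc : 0 ≤ c)
    (h : ∀ v, |g v| ≤ c * ρ v) : chi ρ g ≤ ENNReal.ofReal c :=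
  iSup₂_le fun v hv => ENNReal.ofReal_le_ofReal
    ((h v).trans (mul_le_of_le_one_right hc hv))

lemma chi_mono {ρ₁ ρ₂ : V → ℝ} (h : ∀ v, ρ₁ v ≤ ρ₂ v) (g : V →L[ℝ] ℝ) :
    chi ρ₂ g ≤ chi ρ₁ g :=
  iSup₂_le fun v hv => ofReal_le_chi g ((h v).trans hv)

lemma bound_of_chi {ρ : V → ℝ} (hnn : ∀ v, 0 ≤ ρ v)
    (hom : ∀ (t : ℝ) v, ρ (t • v) = |t| * ρ v) {g : V →L[ℝ] ℝ}
    (hfin : chi ρ g ≠ ⊤) (v : V) : |g v| ≤ (chi ρ g).toReal * ρ v := by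
  rcases eq_or_lt_of_le (hnn v) with h0 | h0
  · have key : ∀ t : ℝ, 0 ≤ t → t * |g v| ≤ (chi ρ g).toReal := by
      intro t ht
      have h1 : ρ (t • v) ≤ 1 := by
        rw [hom, ← h0, mul_zero]; norm_num
      have h2 := ofReal_le_chi g h1
      rw [ENNReal.ofReal_le_iff_le_toReal hfin] at h2
      calc t * |g v| = |g (t • v)| := by
            rw [map_smul, smul_eq_mul, abs_mul, abs_of_nonneg ht]
        _ ≤ _ := h2
    have hgv : |g v| ≤ 0 := by
      by_contra hpos
      push_neg at hpos
      have h3 := key (((chi ρ g).toReal + 1) / |g v|) (by positivity)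
      rw [div_mul_cancel₀ _ (ne_of_gt hpos)] at h3
      linarith
    rw [← h0, mul_zero]
    exact hgv
  · have h1 : ρ ((ρ v)⁻¹ • v) ≤ 1 := by
      rw [hom, abs_of_nonneg (inv_nonneg.2 h0.le), inv_mul_cancel₀ h0.ne']
    have h2 := ofReal_le_chi g h1
    rw [ENNReal.ofReal_le_iff_le_toReal hfin] at h2
    rw [map_smul, smul_eq_mul, abs_mul, abs_of_nonneg (inv_nonneg.2 h0.le)] at h2
    rw [inv_mul_le_iff₀ h0] at h2
    linarith [h2]

end Aux

section AuxSub

variable {X : Type*} [AddCommGroup X] [Module ℝ X] [TopologicalSpace X]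
  {ι : Type*} [Nonempty ι] {p : SeminormFamily ℝ X ι}

lemma ann_restrict {Y : Submodule ℝ X} {f s : X →L[ℝ] ℝ} (hs : s ∈ ann Y) :
    (f - s).comp Y.subtypeL = f.comp Y.subtypeL := by
  ext y
  simp only [ContinuousLinearMap.comp_apply, Submodule.subtypeL_apply,
    ContinuousLinearMap.sub_apply]
  rw [hs y y.2, sub_zero]

lemma chiSub_restrict_le (Y : Submodule ℝ X) (ρ : X → ℝ) (g : X →L[ℝ] ℝ) :
    chiSub Y ρ (g.comp Y.subtypeL) ≤ chi ρ g := by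
  refine iSup₂_le fun w hw => ?_
  exact le_iSup₂ (f := fun v (_ : v ∈ {v : X | ρ v ≤ 1}) => ENNReal.ofReal |g v|) (w : X) hw

lemma hb_ext (hp : WithSeminorms p) (i : ι) (Y : Submodule ℝ X) (f : Y →L[ℝ] ℝ)
    {c : ℝ} (hc : 0 ≤ c) (hf : ∀ y : Y, |f y| ≤ c * p i (y : X)) :
    ∃ g : X →L[ℝ] ℝ, g.comp Y.subtypeL = f ∧ ∀ x, |g x| ≤ c * p i x := by
  obtain ⟨g, hg1, hg2⟩ := exists_extension_of_le_sublinear ⟨Y, (f : Y →ₗ[ℝ] ℝ)⟩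
    (fun x => c * p i x)
    (fun t ht x => by
      show c * p i (t • x) = t * (c * p i x)
      rw [map_smul_eq_mul, Real.norm_eq_abs, abs_of_pos ht]; ring)
    (fun x y => by
      rw [← mul_add]
      exact mul_le_mul_of_nonneg_left (map_add_le_add _ _ _) hc)
    (fun y => (le_abs_self _).trans (hf y))
  have habs : ∀ x, |g x| ≤ c * p i x := by
    intro x
    refine abs_le.2 ⟨?_, hg2 x⟩
    have := hg2 (-x)
    rw [map_neg, map_neg_eq_map] at this
    linarith
  have hcont : Continuous g := by
    refine Seminorm.cont_withSeminorms_normedSpace ℝ hp g ⟨{i}, c.toNNReal, ?_⟩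
    rw [Seminorm.le_def]
    intro x
    rw [Seminorm.comp_apply, Seminorm.smul_apply, Finset.sup_singleton]
    calc ‖g x‖ = |g x| := rfl
      _ ≤ c * p i x := habs x
      _ = c.toNNReal • p i x := by
          rw [NNReal.smul_def, smul_eq_mul, Real.coe_toNNReal c hc]
  refine ⟨⟨g, hcont⟩, ?_, habs⟩
  ext y
  exact hg1 y

lemma bound_of_cont (hp : WithSeminorms p) (hdir : Directed (· ≤ ·) p)
    (Y : Submodule ℝ X) (f : Y →L[ℝ] ℝ) :
    ∃ i c, 0 ≤ c ∧ ∀ y : Y, |f y| ≤ c * p i (y : X) := by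
  have hq : WithSeminorms (p.comp Y.subtype) :=
    Topology.IsInducing.withSeminorms hp (f := Y.subtype) Topology.IsInducing.subtypeVal
  have hfc : Continuous ((normSeminorm ℝ ℝ).comp (f : Y →ₗ[ℝ] ℝ) : Seminorm ℝ Y) := by
    have : Continuous fun y : Y => ‖f y‖ := f.continuous.norm
    exact this
  obtain ⟨s, C, _, hC⟩ := Seminorm.bound_of_continuous hq _ hfc
  obtain ⟨i, hi⟩ := hdir.finset_le s
  refine ⟨i, C, C.coe_nonneg, fun y => ?_⟩
  have h1 := Seminorm.le_def.mp hC y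
  have h2 : (s.sup (p.comp Y.subtype)) y ≤ (p i) (y : X) := by
    have h3 : s.sup (p.comp Y.subtype) ≤ (p i).comp Y.subtype :=
      Finset.sup_le (fun j hj => Seminorm.comp_mono Y.subtype (hi j hj))
    exact Seminorm.le_def.mp h3 y
  rw [Seminorm.comp_apply, Seminorm.smul_apply] at h1
  calc |f y| = ‖f y‖ := rfl
    _ ≤ C • (s.sup (p.comp Y.subtype)) y := h1
    _ ≤ C * p i (y : X) := by
        rw [NNReal.smul_def, smul_eq_mul]
        exact mul_le_mul_of_nonneg_left h2 C.coe_nonneg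

lemma distChi_eq (hp : WithSeminorms p) (j : ι) (Y : Submodule ℝ X) (f : X →L[ℝ] ℝ) :
    distChi (⇑(p j)) f (ann Y) = chiSub Y (⇑(p j)) (f.comp Y.subtypeL) := by
  refine le_antisymm ?_ ?_
  · by_cases htop : chiSub Y (⇑(p j)) (f.comp Y.subtypeL) = ⊤
    · rw [htop]; exact le_top
    · set c := (chiSub Y (⇑(p j)) (f.comp Y.subtypeL)).toReal with hcdef
      have hbound : ∀ y : Y, |(f.comp Y.subtypeL) y| ≤ c * p j (y : X) := by
        refine bound_of_chi (fun w : Y => apply_nonneg (p j) (w : X)) ?_ htop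
        intro t w
        show p j ((t • w : Y) : X) = |t| * p j (w : X)
        rw [Submodule.coe_smul, map_smul_eq_mul, Real.norm_eq_abs]
      obtain ⟨g, hg1, hg2⟩ := hb_ext hp j Y (f.comp Y.subtypeL) ENNReal.toReal_nonneg hbound
      have hmem : f - g ∈ ann Y := by
        intro y hy
        have := congrArg (fun t => t ⟨y, hy⟩) hg1
        simp only [ContinuousLinearMap.comp_apply, Submodule.subtypeL_apply] at this
        simp only [ContinuousLinearMap.sub_apply]
        rw [this, sub_self]
      calc distChi (⇑(p j)) f (ann Y) ≤ chi (⇑(p j)) (f - (f - g)) := iInf₂_le _ hmem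
        _ = chi (⇑(p j)) g := by rw [sub_sub_cancel]
        _ ≤ ENNReal.ofReal c := chi_le_of_bound ENNReal.toReal_nonneg hg2
        _ = chiSub Y (⇑(p j)) (f.comp Y.subtypeL) := ENNReal.ofReal_toReal htop
  · refine le_iInf₂ fun s hs => ?_
    rw [← ann_restrict hs]
    exact chiSub_restrict_le Y _ (f - s)

end AuxSub

theorem statement4 {X : Type*} [AddCommGroup X] [Module ℝ X] [TopologicalSpace X]
    {ι : Type*} [Nonempty ι] (p : SeminormFamily ℝ X ι) (hp : WithSeminorms p)
    (hdir : Directed (· ≤ ·) p) (Y : Submodule ℝ X) :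
    SNP (fun i => ⇑(p i)) Y ↔ HaarProperty (fun i => ⇑(p i)) (ann Y) := by
  constructor
  · intro hSNP f
    obtain ⟨i, hfin, ft, hft⟩ := hSNP (f.comp Y.subtypeL)
    have hii := hft i (fun v => le_rfl)
    have hext0 : ft.comp Y.subtypeL = f.comp Y.subtypeL := hii.1.1
    have hmem : f - ft ∈ ann Y := by
      intro y hy
      have h := congrArg (fun t => t ⟨y, hy⟩) hext0
      simp only [ContinuousLinearMap.comp_apply, Submodule.subtypeL_apply] at h
      simp only [ContinuousLinearMap.sub_apply]
      rw [h, sub_self]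
    refine ⟨i, f - ft, hmem, fun j hij => ?_⟩
    obtain ⟨⟨hext, hchi⟩, huniq⟩ := hft j hij
    have hd : distChi (⇑(p j)) f (ann Y) = chiSub Y (⇑(p j)) (f.comp Y.subtypeL) := by
      refine le_antisymm ?_ ?_
      · calc distChi (⇑(p j)) f (ann Y) ≤ chi (⇑(p j)) (f - (f - ft)) := iInf₂_le _ hmem
          _ = chi (⇑(p j)) ft := by rw [sub_sub_cancel]
          _ = _ := hchi
      · refine le_iInf₂ fun s hs => ?_
        rw [← ann_restrict hs]
        exact chiSub_restrict_le Y _ (f - s)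
    ext s
    simp only [projSet, Set.mem_setOf_eq, Set.mem_singleton_iff]
    constructor
    · rintro ⟨hs, he⟩
      have hHBE : IsHBE Y (⇑(p j)) (f.comp Y.subtypeL) (f - s) :=
        ⟨ann_restrict hs, by rw [he, hd]⟩
      have h1 : f - s = ft := huniq (f - s) hHBE
      rw [← h1, sub_sub_cancel]
    · rintro rfl
      exact ⟨hmem, by rw [sub_sub_cancel, hchi, hd]⟩
  · intro hH f
    obtain ⟨i₀, c, hc, hfb⟩ := bound_of_cont hp hdir Y f
    obtain ⟨g, hg1, hg2⟩ := hb_ext hp i₀ Y f hc hfb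
    obtain ⟨i₁, s₀, hs₀, hproj⟩ := hH g
    obtain ⟨k, hk0, hk1⟩ := hdir i₀ i₁
    have hk0' : ∀ v, p i₀ v ≤ p k v := Seminorm.le_def.mp hk0
    have hk1' : ∀ v, p i₁ v ≤ p k v := Seminorm.le_def.mp hk1
    have hfin : ∀ j, (∀ v, p i₀ v ≤ p j v) → chiSub Y (⇑(p j)) f < ⊤ := by
      intro j hij
      have h1 : chiSub Y (⇑(p j)) f ≤ chiSub Y (⇑(p i₀)) f :=
        chi_mono (fun w : Y => hij (w : X)) f
      have h2 : chiSub Y (⇑(p i₀)) f ≤ ENNReal.ofReal c :=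
        chi_le_of_bound hc (fun w : Y => hfb w)
      exact lt_of_le_of_lt (h1.trans h2) ENNReal.ofReal_lt_top
    refine ⟨k, hfin k hk0', g - s₀, fun j hkj => ?_⟩
    have hij0 : ∀ v, p i₀ v ≤ p j v := fun v => (hk0' v).trans (hkj v)
    have hij1 : ∀ v, p i₁ v ≤ p j v := fun v => (hk1' v).trans (hkj v)
    have hpj := hproj j hij1
    have hd : distChi (⇑(p j)) g (ann Y) = chiSub Y (⇑(p j)) f := by
      rw [distChi_eq hp j Y g, hg1]
    have hs₀p : s₀ ∈ projSet (⇑(p j)) (ann Y) g := by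
      rw [hpj]; exact Set.mem_singleton _
    obtain ⟨hs₀a, hs₀e⟩ := hs₀p
    have hHBE : IsHBE Y (⇑(p j)) f (g - s₀) := by
      constructor
      · rw [ann_restrict hs₀a, hg1]
      · rw [hs₀e, hd]
    refine ⟨hHBE, fun h hh => ?_⟩
    obtain ⟨hh1, hh2⟩ := hh
    have hmem : g - h ∈ ann Y := by
      intro y hy
      have e1 := congrArg (fun t => t ⟨y, hy⟩) hg1
      have e2 := congrArg (fun t => t ⟨y, hy⟩) hh1
      simp only [ContinuousLinearMap.comp_apply, Submodule.subtypeL_apply] at e1 e2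
      simp only [ContinuousLinearMap.sub_apply]
      rw [e1, e2, sub_self]
    have hmem2 : g - h ∈ projSet (⇑(p j)) (ann Y) g :=
      ⟨hmem, by rw [sub_sub_cancel, hh2, hd]⟩
    rw [hpj] at hmem2
    have h3 : g - h = s₀ := hmem2
    rw [← h3, sub_sub_cancel]
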